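/- arXiv:2003.11769 — 2 statements merged into one kernel-verified Lean document; each statement's English description precedes it below -/
import Mathlib

section
/- Let Q(θ) := L(θ) + λ‖θ‖_{clip,τ} where L: ℝ^p → ℝ and λ, τ > 0. For a fixed point θ̂, define the surrogate Q*(θ | θ̂) := L(θ) − (λ/τ)⟨h, θ − τ·1⟩ + (λ/τ)‖θ‖_1, where h ∈ ℝ^p has entries h_j = sign(θ̂_j)·1(|θ̂_j| > τ). Then for any θ̃ with Q*(θ̃ | θ̂) ≤ Q*(θ̂ | θ̂), it holds that Q(θ̃) ≤ Q(θ̂). -/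
open Finset

lemma cccp_key (τ t s : ℝ) (hτ : 0 < τ) :
    min |t| τ + (Real.sign s * (if τ < |s| then (1:ℝ) else 0)) * t - |t| ≤
    min |s| τ + (Real.sign s * (if τ < |s| then (1:ℝ) else 0)) * s - |s| := by
  by_cases hc : τ < |s|
  · simp only [if_pos hc, mul_one]
    have hs0 : s ≠ 0 := by
      intro he; rw [he] at hc; simp at hc; linarith
    rcases lt_or_gt_of_ne hs0 with hneg | hpos
    · rw [Real.sign_of_neg hneg]
      have h1 : |s| = -s := abs_of_neg hneg
      have h2 : min |s| τ = τ := min_eq_right (le_of_lt hc)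
      have h3 : min |t| τ ≤ τ := min_le_right _ _
      have h4 : -t ≤ |t| := neg_le_abs t
      rw [h2, h1]; nlinarith
    · rw [Real.sign_of_pos hpos]
      have h1 : |s| = s := abs_of_pos hpos
      have h2 : min |s| τ = τ := min_eq_right (le_of_lt hc)
      have h3 : min |t| τ ≤ τ := min_le_right _ _
      have h4 : t ≤ |t| := le_abs_self t
      rw [h2, h1]; nlinarith
  · simp only [if_neg hc, mul_zero, zero_mul]
    have h1 : min |s| τ = |s| := min_eq_left (le_of_not_gt hc)
    have h2 : min |t| τ ≤ |t| := min_le_left _ _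
    rw [h1]; linarith

/-- CCCP surrogate descent implies descent of the original clipped-L1 penalized
objective (Proposition 1 of the paper). -/
theorem cccp_surrogate_descent (p : ℕ) (L : (Fin p → ℝ) → ℝ) (lam τ : ℝ)
    (hlam : 0 < lam) (hτ : 0 < τ)
    (θhat : Fin p → ℝ)
    (h : Fin p → ℝ) (hh : ∀ j, h j = Real.sign (θhat j) * (if τ < |θhat j| then (1:ℝ) else 0))
    (Q : (Fin p → ℝ) → ℝ)
    (hQ : ∀ θ, Q θ = L θ + lam * ∑ j, min (|θ j| / τ) 1)
    (Qstar : (Fin p → ℝ) → ℝ)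
    (hQstar : ∀ θ, Qstar θ =
      L θ - (lam / τ) * (∑ j, h j * (θ j - τ)) + (lam / τ) * ∑ j, |θ j|)
    (θtil : Fin p → ℝ) (hdesc : Qstar θtil ≤ Qstar θhat) :
    Q θtil ≤ Q θhat := by
  -- decomposition: Q θ = Qstar θ + (lam/τ) * S θ - lam * ∑ h j
  set S : (Fin p → ℝ) → ℝ :=
    fun θ => ∑ j, (min |θ j| τ + h j * θ j - |θ j|) with hS
  have main : ∀ θ, Q θ = Qstar θ + (lam / τ) * S θ - lam * ∑ j, h j := by
    intro θ
    rw [hQ, hQstar]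
    simp only [hS]
    have e1 : lam * ∑ j, min (|θ j| / τ) 1 = (lam / τ) * ∑ j, min |θ j| τ := by
      rw [Finset.mul_sum, Finset.mul_sum]
      refine Finset.sum_congr rfl fun j _ => ?_
      have : min (|θ j| / τ) 1 = min |θ j| τ / τ := by
        rcases le_total (|θ j|) τ with hle | hle
        · rw [min_eq_left hle, min_eq_left ((div_le_one hτ).mpr hle)]
        · rw [min_eq_right hle, min_eq_right ((one_le_div hτ).mpr hle),
            div_self (ne_of_gt hτ)]
      rw [this]; field_simp
    have e2 : ∑ j, h j * (θ j - τ) = (∑ j, h j * θ j) - τ * ∑ j, h j := by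
      rw [Finset.mul_sum, ← Finset.sum_sub_distrib]
      exact Finset.sum_congr rfl fun j _ => by ring
    have e3 : (∑ j, (min |θ j| τ + h j * θ j - |θ j|)) =
        (∑ j, min |θ j| τ) + (∑ j, h j * θ j) - ∑ j, |θ j| := by
      rw [Finset.sum_sub_distrib, Finset.sum_add_distrib]
    rw [e1, e2, e3]
    field_simp
    ring
  have hSle : S θtil ≤ S θhat := by
    apply Finset.sum_le_sum
    intro j _
    rw [hh j]
    exact cccp_key τ (θtil j) (θhat j) hτ
  have hpos : 0 ≤ lam / τ := le_of_lt (div_pos hlam hτ)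
  have := mul_le_mul_of_nonneg_left hSle hpos
  rw [main θtil, main θhat]
  linarith
end

section
/- Let ρ: ℝ → ℝ be 1-Lipschitz with ρ(0) = 0. Consider two feedforward neural networks f₁, f₂ on [0,1]^d with the same architecture: L hidden layers, at most N nodes per layer, and all weights and biases bounded in absolute value by B ≥ 1. Then sup_{x ∈ [0,1]^d} |f₁(x) − f₂(x)| ≤ (L+1)·(B(N+1))^{L+1}·‖θ(f₁) − θ(f₂)‖_∞, where θ(f) denotes the concatenated vector of all weights and biases of f. -/
open Finset

/-- The hidden-layer outputs (after activation) of a feedforward network: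
`hiddenOut ρ dims W b l x` is `ρ_l ∘ A_l ∘ ⋯ ∘ ρ_1 ∘ A_1 (x)` (and `x` for `l = 0`). -/
def hiddenOut (ρ : ℝ → ℝ) (dims : ℕ → ℕ)
    (W : (l : ℕ) → Fin (dims (l + 1)) → Fin (dims l) → ℝ)
    (b : (l : ℕ) → Fin (dims (l + 1)) → ℝ) :
    (l : ℕ) → (Fin (dims 0) → ℝ) → Fin (dims l) → ℝ
  | 0, x => x
  | l + 1, x => fun i => ρ (∑ j, W l i j * hiddenOut ρ dims W b l x j + b l i)

/-- The output of the network with `L` hidden layers (final layer affine, no activation). -/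
def netOut (ρ : ℝ → ℝ) (dims : ℕ → ℕ)
    (W : (l : ℕ) → Fin (dims (l + 1)) → Fin (dims l) → ℝ)
    (b : (l : ℕ) → Fin (dims (l + 1)) → ℝ) (L : ℕ)
    (x : Fin (dims 0) → ℝ) (i : Fin (dims (L + 1))) : ℝ :=
  ∑ j, W L i j * hiddenOut ρ dims W b L x j + b L i


lemma sum_affine_bound {n m : ℕ} (W : Fin m → Fin n → ℝ) (b : Fin m → ℝ)
    (h : Fin n → ℝ) (B P : ℝ) (hB : 0 ≤ B)
    (hW : ∀ i j, |W i j| ≤ B) (hb : ∀ i, |b i| ≤ B) (hP : ∀ j, |h j| ≤ P) :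
    ∀ i, |∑ j, W i j * h j + b i| ≤ n * (B * P) + B := by
  intro i
  calc |∑ j, W i j * h j + b i| ≤ |∑ j, W i j * h j| + |b i| := abs_add_le _ _
    _ ≤ (∑ j, |W i j * h j|) + B :=
        add_le_add (Finset.abs_sum_le_sum_abs _ _) (hb i)
    _ ≤ (∑ _j : Fin n, B * P) + B := by
        gcongr with j
        rw [abs_mul]
        exact mul_le_mul (hW i j) (hP j) (abs_nonneg _) hB
    _ = n * (B * P) + B := by simp [Finset.sum_const, Finset.card_univ]

lemma sum_affine_diff_bound {n m : ℕ} (W₁ W₂ : Fin m → Fin n → ℝ) (b₁ b₂ : Fin m → ℝ)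
    (h₁ h₂ : Fin n → ℝ) (B ε P D : ℝ) (hB : 0 ≤ B) (hε : 0 ≤ ε)
    (hW₁ : ∀ i j, |W₁ i j| ≤ B) (hWd : ∀ i j, |W₁ i j - W₂ i j| ≤ ε)
    (hbd : ∀ i, |b₁ i - b₂ i| ≤ ε)
    (hP : ∀ j, |h₂ j| ≤ P) (hD : ∀ j, |h₁ j - h₂ j| ≤ D) :
    ∀ i, |(∑ j, W₁ i j * h₁ j + b₁ i) - (∑ j, W₂ i j * h₂ j + b₂ i)|
      ≤ n * (B * D + ε * P) + ε := by
  intro i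
  have heq : (∑ j, W₁ i j * h₁ j + b₁ i) - (∑ j, W₂ i j * h₂ j + b₂ i)
      = (∑ j, (W₁ i j * (h₁ j - h₂ j) + (W₁ i j - W₂ i j) * h₂ j)) + (b₁ i - b₂ i) := by
    rw [show ∑ j, (W₁ i j * (h₁ j - h₂ j) + (W₁ i j - W₂ i j) * h₂ j)
        = ∑ j, (W₁ i j * h₁ j - W₂ i j * h₂ j) from
      Finset.sum_congr rfl (fun j _ => by ring), Finset.sum_sub_distrib]
    ring
  rw [heq]
  calc |(∑ j, (W₁ i j * (h₁ j - h₂ j) + (W₁ i j - W₂ i j) * h₂ j)) + (b₁ i - b₂ i)|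
      ≤ |∑ j, (W₁ i j * (h₁ j - h₂ j) + (W₁ i j - W₂ i j) * h₂ j)| + |b₁ i - b₂ i| := abs_add_le _ _
    _ ≤ (∑ j, |W₁ i j * (h₁ j - h₂ j) + (W₁ i j - W₂ i j) * h₂ j|) + ε :=
        add_le_add (Finset.abs_sum_le_sum_abs _ _) (hbd i)
    _ ≤ (∑ _j : Fin n, (B * D + ε * P)) + ε := by
        gcongr with j
        calc |W₁ i j * (h₁ j - h₂ j) + (W₁ i j - W₂ i j) * h₂ j|
            ≤ |W₁ i j * (h₁ j - h₂ j)| + |(W₁ i j - W₂ i j) * h₂ j| := abs_add_le _ _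
          _ ≤ B * D + ε * P := by
              rw [abs_mul, abs_mul]
              exact add_le_add (mul_le_mul (hW₁ i j) (hD j) (abs_nonneg _) hB)
                (mul_le_mul (hWd i j) (hP j) (abs_nonneg _) hε)
    _ = n * (B * D + ε * P) + ε := by simp [Finset.sum_const, Finset.card_univ, mul_add]

/-- Lipschitz dependence of a network on its parameters (Lemma 2 of the paper):
if two networks share the same architecture, have parameters bounded by `B ≥ 1` that
differ entrywise by at most `ε`, widths at most `N`, and the activation is 1-Lipschitz
with `ρ 0 = 0`, then the outputs on `[0,1]^d` differ by at most
`(L+1) (B(N+1))^{L+1} ε`. -/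
theorem net_param_lipschitz (ρ : ℝ → ℝ) (hlip : LipschitzWith 1 ρ) (hρ0 : ρ 0 = 0)
    (dims : ℕ → ℕ) (L N : ℕ) (B ε : ℝ) (hB : 1 ≤ B) (hε : 0 ≤ ε)
    (hdims : ∀ l ≤ L, dims l ≤ N)
    (W₁ W₂ : (l : ℕ) → Fin (dims (l + 1)) → Fin (dims l) → ℝ)
    (b₁ b₂ : (l : ℕ) → Fin (dims (l + 1)) → ℝ)
    (hW₁ : ∀ l ≤ L, ∀ i j, |W₁ l i j| ≤ B) (hb₁ : ∀ l ≤ L, ∀ i, |b₁ l i| ≤ B)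
    (hW₂ : ∀ l ≤ L, ∀ i j, |W₂ l i j| ≤ B) (hb₂ : ∀ l ≤ L, ∀ i, |b₂ l i| ≤ B)
    (hWd : ∀ l ≤ L, ∀ i j, |W₁ l i j - W₂ l i j| ≤ ε)
    (hbd : ∀ l ≤ L, ∀ i, |b₁ l i - b₂ l i| ≤ ε)
    (x : Fin (dims 0) → ℝ) (hx : ∀ k, x k ∈ Set.Icc (0 : ℝ) 1) :
    ∀ i, |netOut ρ dims W₁ b₁ L x i - netOut ρ dims W₂ b₂ L x i|
      ≤ (L + 1 : ℝ) * (B * (N + 1)) ^ (L + 1) * ε := by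
  set M := B * (N + 1) with hMdef
  have hN0 : (0 : ℝ) ≤ (N : ℝ) := Nat.cast_nonneg N
  have hM1 : (1 : ℝ) ≤ M := by nlinarith
  have hM0 : (0 : ℝ) ≤ M := by linarith
  have hMpow : ∀ l : ℕ, (1 : ℝ) ≤ M ^ l := fun l => one_le_pow₀ hM1
  have hρabs : ∀ s t : ℝ, |ρ s - ρ t| ≤ |s - t| := by
    intro s t
    have := hlip.dist_le_mul s t
    simpa [Real.dist_eq] using this
  have key : ∀ l, l ≤ L →
      (∀ k, |hiddenOut ρ dims W₂ b₂ l x k| ≤ M ^ l) ∧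
      (∀ k, |hiddenOut ρ dims W₁ b₁ l x k - hiddenOut ρ dims W₂ b₂ l x k|
        ≤ (l : ℝ) * M ^ l * ε) := by
    intro l
    induction l with
    | zero =>
      intro _
      constructor
      · intro k
        have := hx k
        simp only [hiddenOut, pow_zero]
        rw [abs_le]
        exact ⟨by linarith [this.1], this.2⟩
      · intro k
        simp [hiddenOut]
    | succ l ih =>
      intro hl
      have hl' : l ≤ L := le_trans (Nat.le_succ l) hl
      obtain ⟨hbound, hdiff⟩ := ih hl'
      have hdl : ((dims l : ℝ)) ≤ (N : ℝ) := Nat.cast_le.mpr (hdims l hl')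
      constructor
      · intro k
        have h1 := sum_affine_bound (W₂ l) (b₂ l) (hiddenOut ρ dims W₂ b₂ l x) B (M ^ l)
          (by linarith) (hW₂ l hl') (hb₂ l hl') hbound k
        have h2 : |hiddenOut ρ dims W₂ b₂ (l + 1) x k|
            ≤ |∑ j, W₂ l k j * hiddenOut ρ dims W₂ b₂ l x j + b₂ l k| := by
          simp only [hiddenOut]
          have := hρabs (∑ j, W₂ l k j * hiddenOut ρ dims W₂ b₂ l x j + b₂ l k) 0
          simpa [hρ0] using this
        have hMl : (1 : ℝ) ≤ M ^ l := hMpow l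
        have : (dims l : ℝ) * (B * M ^ l) + B ≤ M ^ (l + 1) := by
          rw [pow_succ, hMdef]
          nlinarith [mul_nonneg (sub_nonneg.mpr hdl) (mul_nonneg (by linarith : (0:ℝ) ≤ B) (by linarith : (0:ℝ) ≤ M ^ l))]
        linarith
      · intro k
        have h1 := sum_affine_diff_bound (W₁ l) (W₂ l) (b₁ l) (b₂ l)
          (hiddenOut ρ dims W₁ b₁ l x) (hiddenOut ρ dims W₂ b₂ l x)
          B ε (M ^ l) ((l : ℝ) * M ^ l * ε) (by linarith) hε
          (hW₁ l hl') (hWd l hl') (hbd l hl') hbound hdiff k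
        have h2 : |hiddenOut ρ dims W₁ b₁ (l + 1) x k - hiddenOut ρ dims W₂ b₂ (l + 1) x k|
            ≤ |(∑ j, W₁ l k j * hiddenOut ρ dims W₁ b₁ l x j + b₁ l k)
              - (∑ j, W₂ l k j * hiddenOut ρ dims W₂ b₂ l x j + b₂ l k)| := by
          simp only [hiddenOut]
          exact hρabs _ _
        have hMl : (1 : ℝ) ≤ M ^ l := hMpow l
        have hl0 : (0 : ℝ) ≤ (l : ℝ) := Nat.cast_nonneg l
        have h3 : (dims l : ℝ) * (B * ((l : ℝ) * M ^ l * ε) + ε * M ^ l) + ε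
            ≤ ((l : ℝ) + 1) * M ^ (l + 1) * ε := by
          rw [pow_succ, hMdef]
          nlinarith [mul_nonneg (sub_nonneg.mpr hdl) (mul_nonneg (by linarith : (0:ℝ) ≤ B) (mul_nonneg (mul_nonneg hl0 (by linarith : (0:ℝ) ≤ M ^ l)) hε)),
            mul_nonneg (sub_nonneg.mpr hdl) (mul_nonneg hε (by linarith : (0:ℝ) ≤ M ^ l)),
            mul_nonneg (mul_nonneg hl0 (by linarith : (0:ℝ) ≤ M ^ l)) hε,
            mul_nonneg (by linarith : (0:ℝ) ≤ M ^ l) hε,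
            mul_nonneg hN0 (mul_nonneg (by linarith : (0:ℝ) ≤ M ^ l) hε)]
        push_cast
        push_cast at h3
        linarith
  intro i
  obtain ⟨hbound, hdiff⟩ := key L le_rfl
  have hdl : ((dims L : ℝ)) ≤ (N : ℝ) := Nat.cast_le.mpr (hdims L le_rfl)
  have h1 := sum_affine_diff_bound (W₁ L) (W₂ L) (b₁ L) (b₂ L)
    (hiddenOut ρ dims W₁ b₁ L x) (hiddenOut ρ dims W₂ b₂ L x)
    B ε (M ^ L) ((L : ℝ) * M ^ L * ε) (by linarith) hε
    (hW₁ L le_rfl) (hWd L le_rfl) (hbd L le_rfl) hbound hdiff i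
  have hMl : (1 : ℝ) ≤ M ^ L := hMpow L
  have hl0 : (0 : ℝ) ≤ (L : ℝ) := Nat.cast_nonneg L
  have h3 : (dims L : ℝ) * (B * ((L : ℝ) * M ^ L * ε) + ε * M ^ L) + ε
      ≤ ((L : ℝ) + 1) * M ^ (L + 1) * ε := by
    rw [pow_succ, hMdef]
    nlinarith [mul_nonneg (sub_nonneg.mpr hdl) (mul_nonneg hε (by linarith : (0:ℝ) ≤ M ^ L)),
      mul_nonneg (mul_nonneg hl0 (by linarith : (0:ℝ) ≤ M ^ L)) hε,
      mul_nonneg (by linarith : (0:ℝ) ≤ M ^ L) hε,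
      mul_nonneg hN0 (mul_nonneg (by linarith : (0:ℝ) ≤ M ^ L) hε),
      mul_nonneg (sub_nonneg.mpr hdl) (mul_nonneg (by linarith : (0:ℝ) ≤ B) (mul_nonneg (mul_nonneg hl0 (by linarith : (0:ℝ) ≤ M ^ L)) hε))]
  simp only [netOut]
  linarith
end
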